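/- arXiv:1909.01510 — 2 statements merged into one kernel-verified Lean document; each statement's English description precedes it below -/
import Mathlib

section
/- Let j ≥ 0 be an integer, ρ ∈ {0,1}, and let m1, m3 be integers with |m1| ≤ j, |m3| ≤ j and m1 ≡ m3 ≡ ρ (mod 2). Then for every z ∈ ℂ with 2z ∉ ℤ, Σ_{m2} S^j_{m1,m2}(z) · S^j_{m2,m3}(1−z) = π · (Γ(z−1/2)·Γ(1/2−z) / (Γ(z)·Γ(1−z))) · [m1 = m3], where the sum runs over all integers m2 with |m2| ≤ j and m2 ≡ ρ (mod 2), and [m1 = m3] equals 1 if m1 = m3 and 0 otherwise. -/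
namespace Stmt3

noncomputable section

open Finset

/-- Pochhammer symbol `(a)^{(k)} = a(a+1)⋯(a+k−1)` with natural exponent. -/
def pochN (a : ℂ) (k : ℕ) : ℂ := ∏ i ∈ Finset.range k, (a + i)

/-- Pochhammer symbol with complex exponent, `(a)^{(w)} = Γ(a+w)/Γ(a)`. -/
def pochC (a w : ℂ) : ℂ := Complex.Gamma (a + w) / Complex.Gamma a

/-- Generalized binomial coefficient `C(w,k) = w(w−1)⋯(w−k+1)/k!`. -/
def genBinom (w : ℂ) (k : ℕ) : ℂ := (∏ i ∈ Finset.range k, (w - i)) / (Nat.factorial k : ℂ)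

/-- Jacobi polynomial `P^{(α,β)}_n(x)`. -/
def jacobiP (n : ℕ) (α β x : ℂ) : ℂ :=
  ∑ s ∈ Finset.range (n + 1),
    genBinom ((n : ℂ) + α) (n - s) * genBinom ((n : ℂ) + β) s *
      ((x - 1) / 2) ^ s * ((x + 1) / 2) ^ (n - s)

/-- `c^j_m = √((j+m)!(j−m)!)`. -/
def cc (j : ℕ) (m : ℤ) : ℂ :=
  (Real.sqrt ((Nat.factorial ((j : ℤ) + m).toNat) * (Nat.factorial ((j : ℤ) - m).toNat)) : ℝ)

/-- Truncation index of a terminating hypergeometric series: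
`min {k : ℕ | −k is among the numerator parameters}`. -/
def truncN (as : List ℂ) : ℕ := sInf {k : ℕ | (-(k : ℂ)) ∈ as}

/-- Terminating hypergeometric sum `ₚF_q(as; bs; x) = Σ_{k=0}^{N} (as)ₖ/(bs)ₖ · xᵏ/k!`,
where `N` is the smallest `k` such that `−k` is a numerator parameter. -/
def pFq (as bs : List ℂ) (x : ℂ) : ℂ :=
  ∑ k ∈ Finset.range (truncN as + 1),
    ((as.map fun a => pochN a k).prod / (bs.map fun b => pochN b k).prod) * x ^ k /
      (Nat.factorial k : ℂ)

/-- `Q(z,m) = π·2^{2−2z}·Γ(2z−1)/(Γ(z+m)·Γ(z−m))`. -/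
def Qf (z m : ℂ) : ℂ :=
  (Real.pi : ℂ) * (2 : ℂ) ^ ((2 : ℂ) - 2 * z) * Complex.Gamma (2 * z - 1) /
    (Complex.Gamma (z + m) * Complex.Gamma (z - m))

/-- Change-of-basis matrix entry `M^j_{m,m'}`. -/
def Mmat (j : ℕ) (m m' : ℤ) : ℂ :=
  (cc j m' / cc j m) * Complex.I ^ (m' - m) * (2 : ℂ) ^ (-m') *
    jacobiP ((j : ℤ) - m').toNat ((m' : ℂ) - m) ((m' : ℂ) + m) 0

/-- Change-of-basis matrix entry `N^j_{m,m'}`. -/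
def Nmat (j : ℕ) (m m' : ℤ) : ℂ :=
  (cc j m' / cc j m) * Complex.I ^ (m - m') * (2 : ℂ) ^ (-m') *
    jacobiP ((j : ℤ) - m').toNat ((m' : ℂ) - m) ((m' : ℂ) + m) 0

/-- Intertwining-operator matrix entry `S^j_{m,m'}(z) = Σ_k (−1)^k M^j_{m,k} N^j_{k,m'} Q(z,k)`. -/
def Smat (j : ℕ) (m m' : ℤ) (z : ℂ) : ℂ :=
  ∑ k ∈ Finset.Icc (-(j : ℤ)) (j : ℤ), (-1 : ℂ) ^ k * Mmat j m k * Nmat j k m' * Qf z (k : ℂ)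



/-- coefficient of X0^r X1^(p+q-r) in (a X0 + b X1)^p (c X0 + d X1)^q -/
def RcS (a b c d : ℂ) (p q r : ℕ) : ℂ :=
  ∑ s ∈ range (p+1), ∑ t ∈ range (q+1),
    if s + t = r then a^s * b^(p-s) * c^t * d^(q-t) * (p.choose s) * (q.choose t) else 0

lemma RcS_swap (a b c d : ℂ) (p q r : ℕ) :
    RcS a b c d p q r = RcS c d a b q p r := by
  rw [RcS, RcS, Finset.sum_comm]
  refine Finset.sum_congr rfl fun t _ => Finset.sum_congr rfl fun s _ => ?_
  rw [add_comm t s]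
  split_ifs with h
  · ring
  · rfl

lemma RcS_scale (l a b c d : ℂ) (p q r : ℕ) :
    RcS (l*a) b (l*c) d p q r = l^r * RcS a b c d p q r := by
  rw [RcS, RcS, Finset.mul_sum]
  refine Finset.sum_congr rfl fun s _ => ?_
  rw [Finset.mul_sum]
  refine Finset.sum_congr rfl fun t _ => ?_
  split_ifs with h
  · subst h; rw [mul_pow, mul_pow]; ring
  · rw [mul_zero]

lemma RcS_diag (a d : ℂ) (p q r : ℕ) :
    RcS a 0 0 d p q r = if r = p then a^p * d^q else 0 := by
  rw [RcS]
  rw [Finset.sum_eq_single p]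
  · rw [Finset.sum_eq_single 0]
    · simp only [Nat.sub_self, pow_zero, Nat.sub_zero, Nat.choose_self, Nat.choose_zero_right,
        Nat.cast_one, add_zero, mul_one, one_mul]
      split_ifs with h1 h2 h2
      · rfl
      · exact absurd h1.symm h2
      · exact absurd h2.symm h1
      · rfl
    · intro t _ ht
      rw [zero_pow ht]
      simp
    · intro h; simp at h
  · intro s hs hsp
    rw [Finset.mem_range] at hs
    rw [zero_pow (by omega : p - s ≠ 0)]
    simp
  · intro h; simp at h

lemma RcS_anti (b c : ℂ) (p q r : ℕ) :
    RcS 0 b c 0 p q r = if r = q then b^p * c^q else 0 := by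
  rw [RcS]
  rw [Finset.sum_eq_single 0]
  · rw [Finset.sum_eq_single q]
    · simp only [pow_zero, Nat.sub_zero, Nat.sub_self, Nat.choose_self, Nat.choose_zero_right,
        Nat.cast_one, zero_add, mul_one, one_mul]
      split_ifs with h1 h2 h2
      · ring
      · exact absurd h1.symm h2
      · exact absurd h2.symm h1
      · rfl
    · intro t ht htq
      rw [Finset.mem_range] at ht
      rw [zero_pow (by omega : q - t ≠ 0)]
      simp
    · intro h; simp at h
  · intro s _ hs
    rw [zero_pow hs]
    simp
  · intro h; simp at h

open MvPolynomial in
lemma expandP (a b c d : ℂ) (u v : MvPolynomial (Fin 2) ℂ) (p q : ℕ) :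
    (C a * u + C b * v)^p * (C c * u + C d * v)^q
      = ∑ r ∈ range (p+q+1), C (RcS a b c d p q r) * (u^r * v^(p+q-r)) := by
  have hrhs : (∑ r ∈ range (p+q+1), C (RcS a b c d p q r) * (u^r * v^(p+q-r)))
      = ∑ s ∈ range (p+1), ∑ t ∈ range (q+1),
          C (a^s * b^(p-s) * c^t * d^(q-t) * (p.choose s) * (q.choose t))
            * (u^(s+t) * v^(p+q-(s+t))) := by
    calc (∑ r ∈ range (p+q+1), C (RcS a b c d p q r) * (u^r * v^(p+q-r)))
        = ∑ r ∈ range (p+q+1), ∑ s ∈ range (p+1), ∑ t ∈ range (q+1),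
            (if s + t = r then
              C (a^s * b^(p-s) * c^t * d^(q-t) * (p.choose s) * (q.choose t))
                * (u^r * v^(p+q-r)) else 0) := by
          refine Finset.sum_congr rfl fun r _ => ?_
          rw [RcS, map_sum, Finset.sum_mul]
          refine Finset.sum_congr rfl fun s _ => ?_
          rw [map_sum, Finset.sum_mul]
          refine Finset.sum_congr rfl fun t _ => ?_
          rw [apply_ite C, map_zero, ite_mul, zero_mul]
      _ = ∑ s ∈ range (p+1), ∑ r ∈ range (p+q+1), ∑ t ∈ range (q+1), _ := Finset.sum_comm
      _ = ∑ s ∈ range (p+1), ∑ t ∈ range (q+1), ∑ r ∈ range (p+q+1),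
            (if s + t = r then
              C (a^s * b^(p-s) * c^t * d^(q-t) * (p.choose s) * (q.choose t))
                * (u^r * v^(p+q-r)) else 0) :=
          Finset.sum_congr rfl fun s _ => Finset.sum_comm
      _ = _ := by
          refine Finset.sum_congr rfl fun s hs => Finset.sum_congr rfl fun t ht => ?_
          rw [Finset.mem_range] at hs ht
          rw [Finset.sum_ite_eq (range (p+q+1)) (s+t)]
          rw [if_pos (Finset.mem_range.mpr (by omega))]
  rw [hrhs, add_pow, add_pow, Finset.sum_mul_sum]
  refine Finset.sum_congr rfl fun s hs => Finset.sum_congr rfl fun t ht => ?_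
  rw [Finset.mem_range] at hs ht
  have hv : p + q - (s + t) = (p - s) + (q - t) := by omega
  rw [hv]
  simp only [map_mul, map_pow, map_natCast]
  ring

open MvPolynomial in
lemma indepP (n : ℕ) (e e' : ℕ → ℂ)
    (h : (∑ r ∈ range (n+1), C (e r) * ((X 0 : MvPolynomial (Fin 2) ℂ)^r * X 1^(n-r)))
       = ∑ r ∈ range (n+1), C (e' r) * ((X 0 : MvPolynomial (Fin 2) ℂ)^r * X 1^(n-r)))
    (t : ℕ) (htn : t ≤ n) : e t = e' t := by
  have key : ∀ f : ℕ → ℂ,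
      coeff (Finsupp.single 0 t + Finsupp.single 1 (n-t))
        (∑ r ∈ range (n+1), C (f r) * ((X 0 : MvPolynomial (Fin 2) ℂ)^r * X 1^(n-r))) = f t := by
    intro f
    rw [coeff_sum]
    have hterm : ∀ r ∈ range (n+1),
        coeff (Finsupp.single 0 t + Finsupp.single 1 (n-t))
          (C (f r) * ((X 0 : MvPolynomial (Fin 2) ℂ)^r * X 1^(n-r)))
        = if r = t then f r else 0 := by
      intro r hr
      rw [Finset.mem_range] at hr
      rw [X_pow_eq_monomial, X_pow_eq_monomial, monomial_mul, C_mul_monomial]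
      rw [coeff_monomial]
      have harg : (Finsupp.single (0:Fin 2) r + Finsupp.single 1 (n-r)
          = Finsupp.single 0 t + Finsupp.single 1 (n-t)) ↔ r = t := by
        constructor
        · intro hEq
          have := DFunLike.congr_fun hEq (0 : Fin 2)
          simpa [Finsupp.single_apply] using this
        · intro hEq; subst hEq; rfl
      rw [mul_one]
      simp only [harg, mul_one]
    rw [Finset.sum_congr rfl hterm, Finset.sum_ite_eq' (range (n+1)) t]
    rw [if_pos (Finset.mem_range.mpr (by omega))]
  have h1 := key e
  have h2 := key e'
  rw [h] at h1
  rw [h2] at h1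
  exact h1.symm

open MvPolynomial in
lemma compRcS (a b c d al be ga de : ℂ) (p q t : ℕ) (ht : t ≤ p + q) :
    RcS (a*al+b*ga) (a*be+b*de) (c*al+d*ga) (c*be+d*de) p q t
      = ∑ r ∈ range (p+q+1), RcS a b c d p q r * RcS al be ga de r (p+q-r) t := by
  have hu : (C (a*al+b*ga) * (X 0 : MvPolynomial (Fin 2) ℂ) + C (a*be+b*de) * X 1)
      = C a * (C al * X 0 + C be * X 1) + C b * (C ga * X 0 + C de * X 1) := by
    simp only [map_add, map_mul]; ring
  have hv : (C (c*al+d*ga) * (X 0 : MvPolynomial (Fin 2) ℂ) + C (c*be+d*de) * X 1)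
      = C c * (C al * X 0 + C be * X 1) + C d * (C ga * X 0 + C de * X 1) := by
    simp only [map_add, map_mul]; ring
  have E1 := expandP (a*al+b*ga) (a*be+b*de) (c*al+d*ga) (c*be+d*de)
      (X 0 : MvPolynomial (Fin 2) ℂ) (X 1) p q
  rw [hu, hv] at E1
  rw [expandP a b c d (C al * X 0 + C be * X 1) (C ga * X 0 + C de * X 1) p q] at E1
  have E2 : ∀ r ∈ range (p+q+1),
      C (RcS a b c d p q r) * ((C al * X 0 + C be * X 1)^r * (C ga * X 0 + C de * X 1)^(p+q-r))
      = ∑ s ∈ range (p+q+1),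
          C (RcS a b c d p q r * RcS al be ga de r (p+q-r) s)
            * ((X 0 : MvPolynomial (Fin 2) ℂ)^s * X 1^(p+q-s)) := by
    intro r hr
    rw [Finset.mem_range] at hr
    have hrq : r + (p + q - r) = p + q := by omega
    rw [expandP al be ga de (X 0) (X 1) r (p+q-r), hrq, Finset.mul_sum]
    refine Finset.sum_congr rfl fun s _ => ?_
    rw [map_mul]; ring
  rw [Finset.sum_congr rfl E2, Finset.sum_comm] at E1
  have E3 : ∀ s ∈ range (p+q+1),
      (∑ r ∈ range (p+q+1), C (RcS a b c d p q r * RcS al be ga de r (p+q-r) s)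
          * ((X 0 : MvPolynomial (Fin 2) ℂ)^s * X 1^(p+q-s)))
      = C (∑ r ∈ range (p+q+1), RcS a b c d p q r * RcS al be ga de r (p+q-r) s)
          * ((X 0 : MvPolynomial (Fin 2) ℂ)^s * X 1^(p+q-s)) := by
    intro s _
    rw [map_sum, Finset.sum_mul]
  rw [Finset.sum_congr rfl E3] at E1
  exact (indepP (p+q) _ _ E1 t ht).symm

lemma genBinom_natCast (N k : ℕ) : genBinom (N : ℂ) k = (N.choose k : ℂ) := by
  rcases le_or_gt k N with h | h
  · have hprod : (∏ i ∈ Finset.range k, ((N : ℂ) - i)) = (N.descFactorial k : ℂ) := by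
      induction k with
      | zero => simp
      | succ n ih =>
        rw [Finset.prod_range_succ, ih (by omega), Nat.descFactorial_succ]
        push_cast [Nat.cast_sub (by omega : n ≤ N)]
        ring
    rw [genBinom, hprod, Nat.descFactorial_eq_factorial_mul_choose]
    push_cast
    rw [mul_comm]
    rw [mul_div_assoc]
    rw [div_self (by exact_mod_cast Nat.factorial_ne_zero k), mul_one]
  · rw [genBinom, Finset.prod_eq_zero (Finset.mem_range.mpr h) (by simp), zero_div]
    rw [Nat.choose_eq_zero_of_lt h, Nat.cast_zero]

lemma sum_range_change (A B : ℕ) (g : ℕ → ℂ) (hg : ∀ s, g s ≠ 0 → s < A ∧ s < B) :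
    (∑ s ∈ range A, g s) = ∑ s ∈ range B, g s := by
  have hA : (∑ s ∈ range A, g s) = ∑ s ∈ range (max A B), g s :=
    Finset.sum_subset (Finset.range_subset_range.mpr (le_max_left A B))
      (fun s _ hs => by
        by_contra hne
        exact hs (Finset.mem_range.mpr (hg s hne).1))
  have hB : (∑ s ∈ range B, g s) = ∑ s ∈ range (max A B), g s :=
    Finset.sum_subset (Finset.range_subset_range.mpr (le_max_right A B))
      (fun s _ hs => by
        by_contra hne
        exact hs (Finset.mem_range.mpr (hg s hne).2))
  rw [hA, hB]

lemma jacobiP_zero (P Q n : ℕ) :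
    jacobiP n ((Q:ℂ) - n) ((P:ℂ) - n) 0 = RcS (-(1/2)) 1 (1/2) 1 P Q n := by
  have hQ : (n : ℂ) + ((Q:ℂ) - n) = (Q : ℂ) := by ring
  have hP : (n : ℂ) + ((P:ℂ) - n) = (P : ℂ) := by ring
  rw [jacobiP, RcS]
  simp only [hQ, hP]
  have step1 : ∀ s t : ℕ,
      (if s + t = n then (-(1/2):ℂ)^s * (1:ℂ)^(P-s) * (1/2)^t * (1:ℂ)^(Q-t) * (P.choose s) * (Q.choose t) else 0)
      = (if s + t = n then (-(1/2):ℂ)^s * (1/2)^t * (P.choose s) * (Q.choose t) else 0) := by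
    intro s t; split_ifs with h
    · rw [one_pow, one_pow]; ring
    · rfl
  rw [Finset.sum_congr rfl fun s _ => Finset.sum_congr rfl fun t _ => step1 s t]
  have hnz : ∀ (M k : ℕ), ((M.choose k : ℂ) ≠ 0) → k ≤ M := by
    intro M k h
    by_contra hc
    exact h (by rw [Nat.choose_eq_zero_of_lt (by omega)]; norm_num)
  have inner : ∀ s : ℕ, (∑ t ∈ range (Q+1),
        (if s + t = n then (-(1/2):ℂ)^s * (1/2)^t * (P.choose s) * (Q.choose t) else 0))
      = ∑ t ∈ range (n+1),
        (if s + t = n then (-(1/2):ℂ)^s * (1/2)^t * (P.choose s) * (Q.choose t) else 0) := by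
    intro s
    refine sum_range_change _ _ _ (fun t hne => ?_)
    have h1 : s + t = n := by by_contra hc; rw [if_neg hc] at hne; exact hne rfl
    rw [if_pos h1] at hne
    have h2 : (Q.choose t : ℂ) ≠ 0 := fun hc => hne (by rw [hc]; ring)
    exact ⟨by have := hnz Q t h2; omega, by omega⟩
  rw [Finset.sum_congr rfl fun s _ => inner s]
  have outer : (∑ s ∈ range (P+1), ∑ t ∈ range (n+1),
        (if s + t = n then (-(1/2):ℂ)^s * (1/2)^t * (P.choose s) * (Q.choose t) else 0))
      = ∑ s ∈ range (n+1), ∑ t ∈ range (n+1),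
        (if s + t = n then (-(1/2):ℂ)^s * (1/2)^t * (P.choose s) * (Q.choose t) else 0) := by
    refine sum_range_change _ _ _ (fun s hne => ?_)
    have h1 : ∃ t ∈ range (n+1),
        (if s + t = n then (-(1/2):ℂ)^s * (1/2)^t * (P.choose s) * (Q.choose t) else 0) ≠ 0 :=
      Finset.exists_ne_zero_of_sum_ne_zero hne
    obtain ⟨t, _, hne2⟩ := h1
    have h2 : s + t = n := by by_contra hc; rw [if_neg hc] at hne2; exact hne2 rfl
    rw [if_pos h2] at hne2
    have h3 : (P.choose s : ℂ) ≠ 0 := fun hc => hne2 (by rw [hc]; ring)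
    exact ⟨by have := hnz P s h3; omega, by omega⟩
  rw [outer]
  refine Finset.sum_congr rfl (fun s hs => ?_)
  rw [Finset.mem_range] at hs
  have collapse : (∑ t ∈ range (n+1),
        (if s + t = n then (-(1/2):ℂ)^s * (1/2)^t * (P.choose s) * (Q.choose t) else 0))
      = (-(1/2):ℂ)^s * (1/2)^(n-s) * (P.choose s) * (Q.choose (n-s)) := by
    have step2 : ∀ t ∈ range (n+1),
        (if s + t = n then (-(1/2):ℂ)^s * (1/2)^t * (P.choose s) * (Q.choose t) else 0)
        = (if t = n - s then (-(1/2):ℂ)^s * (1/2)^t * (P.choose s) * (Q.choose t) else 0) := by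
      intro t _
      split_ifs with h1 h2 h2
      · rfl
      · omega
      · omega
      · rfl
    rw [Finset.sum_congr rfl step2, Finset.sum_ite_eq' (range (n+1)) (n-s)]
    rw [if_pos (Finset.mem_range.mpr (by omega))]
  rw [collapse, genBinom_natCast, genBinom_natCast]
  norm_num
  ring

lemma cc_ne_zero (j : ℕ) (m : ℤ) : cc j m ≠ 0 := by
  rw [cc]
  rw [ne_eq, Complex.ofReal_eq_zero]
  have h1 : (0:ℝ) < (Nat.factorial ((j : ℤ) + m).toNat) * (Nat.factorial ((j : ℤ) - m).toNat) := by
    positivity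
  positivity

lemma cc_neg (j : ℕ) (m : ℤ) : cc j (-m) = cc j m := by
  rw [cc, cc]
  have h1 : (j:ℤ) + -m = (j:ℤ) - m := by ring
  have h2 : (j:ℤ) - -m = (j:ℤ) + m := by ring
  rw [h1, h2]
  congr 1
  rw [mul_comm]

lemma qj_cast {j : ℕ} {m : ℤ} (hm : |m| ≤ (j:ℤ)) :
    ((((j:ℤ) - m).toNat : ℕ) : ℂ) = (j : ℂ) - (m : ℂ) := by
  have hab := abs_le.mp hm
  have h1 : ((((j:ℤ) - m).toNat : ℕ) : ℤ) = (j:ℤ) - m := Int.toNat_of_nonneg (by omega)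
  have := congrArg (fun x : ℤ => (x : ℂ)) h1
  push_cast at this ⊢
  exact this

lemma pj_cast {j : ℕ} {m : ℤ} (hm : |m| ≤ (j:ℤ)) :
    ((((j:ℤ) + m).toNat : ℕ) : ℂ) = (j : ℂ) + (m : ℂ) := by
  have hab := abs_le.mp hm
  have h1 : ((((j:ℤ) + m).toNat : ℕ) : ℤ) = (j:ℤ) + m := Int.toNat_of_nonneg (by omega)
  have := congrArg (fun x : ℤ => (x : ℂ)) h1
  push_cast at this ⊢
  exact this

lemma sum_Icc_reindex (j : ℕ) (f : ℤ → ℂ) :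
    ∑ k ∈ Finset.Icc (-(j:ℤ)) (j:ℤ), f k = ∑ r ∈ range (2*j+1), f ((j:ℤ) - r) := by
  refine Finset.sum_nbij' (fun k => ((j:ℤ) - k).toNat) (fun r => (j:ℤ) - r) ?_ ?_ ?_ ?_ ?_
  · intro k hk
    rw [Finset.mem_Icc] at hk
    rw [Finset.mem_range]
    omega
  · intro r hr
    rw [Finset.mem_range] at hr
    rw [Finset.mem_Icc]
    omega
  · intro k hk
    rw [Finset.mem_Icc] at hk
    omega
  · intro r hr
    rw [Finset.mem_range] at hr
    omega
  · intro k hk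
    rw [Finset.mem_Icc] at hk
    congr 1
    omega

lemma Mmat_eq (j : ℕ) (m k : ℤ) (hm : |m| ≤ (j:ℤ)) (hk : |k| ≤ (j:ℤ)) :
    Mmat j m k = (cc j k / cc j m) * Complex.I ^ (k - m) * (2:ℂ)^(-k) *
      RcS (-(1/2)) 1 (1/2) 1 ((j:ℤ)+m).toNat ((j:ℤ)-m).toNat ((j:ℤ)-k).toNat := by
  rw [Mmat]
  congr 1
  have e1 : ((k:ℂ) - m) = (((((j:ℤ)-m).toNat : ℕ)) : ℂ) - ((((j:ℤ)-k).toNat : ℕ) : ℂ) := by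
    rw [qj_cast hm, qj_cast hk]; ring
  have e2 : ((k:ℂ) + m) = (((((j:ℤ)+m).toNat : ℕ)) : ℂ) - ((((j:ℤ)-k).toNat : ℕ) : ℂ) := by
    rw [pj_cast hm, qj_cast hk]; ring
  rw [e1, e2]
  exact jacobiP_zero _ _ _

lemma Nmat_eq (j : ℕ) (k m : ℤ) (hk : |k| ≤ (j:ℤ)) (hm : |m| ≤ (j:ℤ)) :
    Nmat j k m = (cc j m / cc j k) * Complex.I ^ (k - m) * (2:ℂ)^(-m) *
      RcS (-(1/2)) 1 (1/2) 1 ((j:ℤ)+k).toNat ((j:ℤ)-k).toNat ((j:ℤ)-m).toNat := by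
  rw [Nmat]
  congr 1
  have e1 : ((m:ℂ) - k) = (((((j:ℤ)-k).toNat : ℕ)) : ℂ) - ((((j:ℤ)-m).toNat : ℕ) : ℂ) := by
    rw [qj_cast hm, qj_cast hk]; ring
  have e2 : ((m:ℂ) + k) = (((((j:ℤ)+k).toNat : ℕ)) : ℂ) - ((((j:ℤ)-m).toNat : ℕ) : ℂ) := by
    rw [pj_cast hk, qj_cast hm]; ring
  rw [e1, e2]
  exact jacobiP_zero _ _ _

lemma I_zpow_two : Complex.I ^ (2:ℤ) = -1 := by
  rw [show (2:ℤ) = ((2:ℕ):ℤ) from rfl, zpow_natCast, Complex.I_sq]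

lemma I_zpow_mul (k m1 m3 : ℤ) :
    Complex.I ^ (k - m1) * Complex.I ^ (k - m3) = (-1:ℂ) ^ k * Complex.I ^ (-(m1+m3)) := by
  rw [← zpow_add₀ Complex.I_ne_zero]
  rw [show k - m1 + (k - m3) = 2*k + (-(m1+m3)) by ring]
  rw [zpow_add₀ Complex.I_ne_zero, zpow_mul, I_zpow_two]

lemma zpow_sub_split (w : ℂ) (hw : w ≠ 0) (a b : ℕ) :
    w ^ ((a:ℤ) - (b:ℤ)) = w ^ (a:ℕ) * (w⁻¹) ^ (b:ℕ) := by
  rw [zpow_sub₀ hw, zpow_natCast, zpow_natCast, div_eq_mul_inv, inv_pow]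

lemma zpow_merge3 (w : ℂ) (hw : w ≠ 0) (a b c d : ℤ) (h : a + b + c = d) :
    w^a * w^b * w^c = w^d := by
  rw [← zpow_add₀ hw a b, ← zpow_add₀ hw (a+b) c, h]

lemma neg_one_zpow_two_mul (t : ℤ) : (-1:ℂ)^(2*t) = 1 := by
  rw [zpow_mul]; norm_num

lemma g0scale (p q r : ℕ) :
    ((-1:ℂ)^r * 2^r) * RcS (-(1/2)) 1 (1/2) 1 p q r = RcS 1 1 (-1) 1 p q r := by
  rw [show ((-1:ℂ)^r * (2:ℂ)^r) = (-2:ℂ)^r by rw [← mul_pow]; norm_num]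
  rw [← RcS_scale (-2) (-(1/2)) 1 (1/2) 1 p q r]
  norm_num

lemma g0scale2 (p q r : ℕ) :
    ((2:ℂ)^r) * RcS (-(1/2)) 1 (1/2) 1 p q r = RcS (-1) 1 1 1 p q r := by
  rw [← RcS_scale 2 (-(1/2)) 1 (1/2) 1 p q r]
  norm_num

lemma Sum1 (j : ℕ) (m1 m3 : ℤ) (h1 : |m1| ≤ (j:ℤ)) (h3 : |m3| ≤ (j:ℤ)) :
    (∑ k ∈ Finset.Icc (-(j:ℤ)) (j:ℤ), Mmat j m1 k * Nmat j k m3)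
      = if m1 = m3 then 1 else 0 := by
  have hab1 := abs_le.mp h1
  have hab3 := abs_le.mp h3
  set p1 := ((j:ℤ)+m1).toNat with hp1
  set q1 := ((j:ℤ)-m1).toNat with hq1
  set t := ((j:ℤ)-m3).toNat with ht
  set CST := (cc j m3 / cc j m1) * Complex.I ^ (-(m1+m3)) * (2:ℂ)^(-m3) *
      ((-1:ℂ)^(j:ℕ) * ((2:ℂ)⁻¹)^(j:ℕ)) with hCST
  rw [sum_Icc_reindex j (fun k => Mmat j m1 k * Nmat j k m3)]
  have hterm : ∀ r ∈ range (2*j+1),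
      Mmat j m1 ((j:ℤ)-r) * Nmat j ((j:ℤ)-r) m3
        = CST * (((-1:ℂ)^r * 2^r) * RcS (-(1/2)) 1 (1/2) 1 p1 q1 r
            * RcS (-(1/2)) 1 (1/2) 1 (2*j-r) r t) := by
    intro r hr
    rw [Finset.mem_range] at hr
    have hk : |(j:ℤ)-r| ≤ (j:ℤ) := by rw [abs_le]; omega
    rw [Mmat_eq j m1 ((j:ℤ)-r) h1 hk, Nmat_eq j ((j:ℤ)-r) m3 hk h3]
    have e1 : ((j:ℤ) - ((j:ℤ)-r)).toNat = r := by omega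
    have e2 : ((j:ℤ) + ((j:ℤ)-r)).toNat = 2*j-r := by omega
    rw [e1, e2]
    have hA : cc j ((j:ℤ)-r) / cc j m1 * (cc j m3 / cc j ((j:ℤ)-r))
        = cc j m3 / cc j m1 := by
      rw [div_mul_div_comm, mul_comm (cc j ((j:ℤ)-(r:ℤ))) (cc j m3),
        mul_div_mul_right _ _ (cc_ne_zero j ((j:ℤ)-r))]
    calc (cc j ((j:ℤ)-r) / cc j m1 * Complex.I ^ ((j:ℤ)-r - m1) * (2:ℂ)^(-((j:ℤ)-r)) *
            RcS (-(1/2)) 1 (1/2) 1 p1 q1 r) *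
          (cc j m3 / cc j ((j:ℤ)-r) * Complex.I ^ ((j:ℤ)-r - m3) * (2:ℂ)^(-m3) *
            RcS (-(1/2)) 1 (1/2) 1 (2*j-r) r t)
        = (cc j ((j:ℤ)-r) / cc j m1 * (cc j m3 / cc j ((j:ℤ)-r))) *
            (Complex.I ^ ((j:ℤ)-r - m1) * Complex.I ^ ((j:ℤ)-r - m3)) *
            (2:ℂ)^(-((j:ℤ)-r)) * (2:ℂ)^(-m3) *
            (RcS (-(1/2)) 1 (1/2) 1 p1 q1 r * RcS (-(1/2)) 1 (1/2) 1 (2*j-r) r t) := by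
          ring
      _ = _ := by
          rw [hA, I_zpow_mul ((j:ℤ)-r) m1 m3]
          rw [show -((j:ℤ)-(r:ℤ)) = ((r:ℕ):ℤ) - ((j:ℕ):ℤ) by push_cast; ring]
          rw [zpow_sub_split 2 two_ne_zero r j]
          rw [show ((j:ℤ) - (r:ℤ)) = ((j:ℕ):ℤ) - ((r:ℕ):ℤ) by push_cast; ring]
          rw [zpow_sub_split (-1) (by norm_num) j r]
          rw [show ((-1:ℂ))⁻¹ = -1 by norm_num]
          rw [hCST]
          ring
  rw [Finset.sum_congr rfl hterm, ← Finset.mul_sum]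
  have hstep : ∀ r ∈ range (2*j+1),
      (((-1:ℂ)^r * 2^r) * RcS (-(1/2)) 1 (1/2) 1 p1 q1 r
          * RcS (-(1/2)) 1 (1/2) 1 (2*j-r) r t)
      = RcS 1 1 (-1) 1 p1 q1 r * RcS (1/2) 1 (-(1/2)) 1 r (2*j-r) t := by
    intro r _
    rw [g0scale, RcS_swap (-(1/2)) 1 (1/2) 1 (2*j-r) r t]
  rw [Finset.sum_congr rfl hstep]
  have hpq : p1 + q1 = 2*j := by omega
  have htle : t ≤ p1 + q1 := by omega
  rw [show 2*j = p1 + q1 from hpq.symm]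
  rw [← compRcS 1 1 (-1) 1 (1/2) 1 (-(1/2)) 1 p1 q1 t htle]
  rw [show (1:ℂ)*(1/2)+1*(-(1/2)) = 0 by norm_num, show (1:ℂ)*1+1*1 = 2 by norm_num,
      show (-1:ℂ)*(1/2)+1*(-(1/2)) = -1 by norm_num, show (-1:ℂ)*1+1*1 = 0 by norm_num]
  rw [RcS_anti]
  have hcond : (t = q1) ↔ (m1 = m3) := by constructor <;> (intro h; omega)
  by_cases hm : m1 = m3
  · rw [if_pos (hcond.mpr hm), if_pos hm]
    subst hm
    rw [hCST, div_self (cc_ne_zero j m1)]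
    have eI : Complex.I ^ (-(m1+m1)) = (-1:ℂ) ^ (-m1) := by
      rw [show -(m1+m1) = 2 * (-m1) by ring, zpow_mul, I_zpow_two]
    rw [eI]
    have e2p : ((2:ℂ))^(p1:ℕ) = (2:ℂ)^((j:ℤ) + m1) := by
      rw [← zpow_natCast]
      congr 1
      omega
    have e2i : ((2:ℂ)⁻¹)^(j:ℕ) = (2:ℂ)^(-(j:ℤ)) := by
      rw [inv_pow, ← zpow_natCast, ← zpow_neg]
    have eno : ((-1:ℂ))^(q1:ℕ) = (-1:ℂ)^((j:ℤ) - m1) := by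
      rw [← zpow_natCast]
      congr 1
      omega
    have enj : ((-1:ℂ))^(j:ℕ) = (-1:ℂ)^((j:ℤ)) := by rw [← zpow_natCast]
    rw [e2p, e2i, eno, enj]
    calc 1 * (-1:ℂ)^(-m1) * (2:ℂ)^(-m1) * ((-1:ℂ)^((j:ℤ)) * (2:ℂ)^(-(j:ℤ))) *
          ((2:ℂ)^((j:ℤ)+m1) * (-1:ℂ)^((j:ℤ)-m1))
        = ((-1:ℂ)^(-m1) * (-1:ℂ)^((j:ℤ)) * (-1:ℂ)^((j:ℤ)-m1)) *
          ((2:ℂ)^(-m1) * (2:ℂ)^(-(j:ℤ)) * (2:ℂ)^((j:ℤ)+m1)) := by ring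
      _ = 1 := by
          rw [zpow_merge3 (-1) (by norm_num) _ _ _ (2*((j:ℤ)-m1)) (by ring),
              zpow_merge3 2 two_ne_zero _ _ _ 0 (by ring),
              neg_one_zpow_two_mul, zpow_zero, mul_one]
  · rw [if_neg (fun h => hm (hcond.mp h)), if_neg hm, mul_zero]

lemma I_zpow_mulA (m2 k k' : ℤ) :
    Complex.I ^ (k - m2) * Complex.I ^ (k' - m2) = (-1:ℂ)^(-m2) * Complex.I ^ (k+k') := by
  rw [← zpow_add₀ Complex.I_ne_zero]
  rw [show k - m2 + (k' - m2) = 2*(-m2) + (k+k') by ring]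
  rw [zpow_add₀ Complex.I_ne_zero, zpow_mul, I_zpow_two]

lemma I_zpow_mul2 (k m1 m3 : ℤ) :
    Complex.I ^ (k - m1) * Complex.I ^ (-k - m3) = Complex.I ^ (-(m1+m3)) := by
  rw [← zpow_add₀ Complex.I_ne_zero]
  rw [show k - m1 + (-k - m3) = -(m1+m3) by ring]

lemma Sum2 (j : ℕ) (m1 m3 : ℤ) (h1 : |m1| ≤ (j:ℤ)) (h3 : |m3| ≤ (j:ℤ)) :
    (∑ k ∈ Finset.Icc (-(j:ℤ)) (j:ℤ), (-1:ℂ)^k * Mmat j m1 k * Nmat j (-k) m3)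
      = if m1 = m3 then (-1:ℂ)^(m3 + (j:ℤ)) else 0 := by
  have hab1 := abs_le.mp h1
  have hab3 := abs_le.mp h3
  set p1 := ((j:ℤ)+m1).toNat with hp1
  set q1 := ((j:ℤ)-m1).toNat with hq1
  set t := ((j:ℤ)-m3).toNat with ht
  set CST := (cc j m3 / cc j m1) * Complex.I ^ (-(m1+m3)) * (2:ℂ)^(-m3) *
      ((-1:ℂ)^(j:ℕ) * ((2:ℂ)⁻¹)^(j:ℕ)) with hCST
  rw [sum_Icc_reindex j (fun k => (-1:ℂ)^k * Mmat j m1 k * Nmat j (-k) m3)]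
  have hterm : ∀ r ∈ range (2*j+1),
      (-1:ℂ)^((j:ℤ)-r) * Mmat j m1 ((j:ℤ)-r) * Nmat j (-((j:ℤ)-r)) m3
        = CST * (((-1:ℂ)^r * 2^r) * RcS (-(1/2)) 1 (1/2) 1 p1 q1 r
            * RcS (-(1/2)) 1 (1/2) 1 r (2*j-r) t) := by
    intro r hr
    rw [Finset.mem_range] at hr
    have hk : |(j:ℤ)-r| ≤ (j:ℤ) := by rw [abs_le]; omega
    have hk' : |-((j:ℤ)-r)| ≤ (j:ℤ) := by rw [abs_le]; omega
    rw [Mmat_eq j m1 ((j:ℤ)-r) h1 hk, Nmat_eq j (-((j:ℤ)-r)) m3 hk' h3]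
    have e0 : ((j:ℤ) - ((j:ℤ)-r)).toNat = r := by omega
    have e1 : ((j:ℤ) + -((j:ℤ)-r)).toNat = r := by omega
    have e2 : ((j:ℤ) - -((j:ℤ)-r)).toNat = 2*j-r := by omega
    rw [e0, e1, e2, cc_neg j ((j:ℤ)-r)]
    have hA : cc j ((j:ℤ)-r) / cc j m1 * (cc j m3 / cc j ((j:ℤ)-r))
        = cc j m3 / cc j m1 := by
      rw [div_mul_div_comm, mul_comm (cc j ((j:ℤ)-(r:ℤ))) (cc j m3),
        mul_div_mul_right _ _ (cc_ne_zero j ((j:ℤ)-r))]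
    calc (-1:ℂ)^((j:ℤ)-r) *
          (cc j ((j:ℤ)-r) / cc j m1 * Complex.I ^ ((j:ℤ)-r - m1) * (2:ℂ)^(-((j:ℤ)-r)) *
            RcS (-(1/2)) 1 (1/2) 1 p1 q1 r) *
          (cc j m3 / cc j ((j:ℤ)-r) * Complex.I ^ (-((j:ℤ)-r) - m3) * (2:ℂ)^(-m3) *
            RcS (-(1/2)) 1 (1/2) 1 r (2*j-r) t)
        = (cc j ((j:ℤ)-r) / cc j m1 * (cc j m3 / cc j ((j:ℤ)-r))) *
            (Complex.I ^ ((j:ℤ)-r - m1) * Complex.I ^ (-((j:ℤ)-r) - m3)) *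
            (-1:ℂ)^((j:ℤ)-r) *
            (2:ℂ)^(-((j:ℤ)-r)) * (2:ℂ)^(-m3) *
            (RcS (-(1/2)) 1 (1/2) 1 p1 q1 r * RcS (-(1/2)) 1 (1/2) 1 r (2*j-r) t) := by
          ring
      _ = _ := by
          rw [hA, I_zpow_mul2 ((j:ℤ)-r) m1 m3]
          rw [show -((j:ℤ)-(r:ℤ)) = ((r:ℕ):ℤ) - ((j:ℕ):ℤ) by push_cast; ring]
          rw [zpow_sub_split 2 two_ne_zero r j]
          rw [show ((j:ℤ) - (r:ℤ)) = ((j:ℕ):ℤ) - ((r:ℕ):ℤ) by push_cast; ring]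
          rw [zpow_sub_split (-1) (by norm_num) j r]
          rw [show ((-1:ℂ))⁻¹ = -1 by norm_num]
          rw [hCST]
          ring
  rw [Finset.sum_congr rfl hterm, ← Finset.mul_sum]
  have hstep : ∀ r ∈ range (2*j+1),
      (((-1:ℂ)^r * 2^r) * RcS (-(1/2)) 1 (1/2) 1 p1 q1 r
          * RcS (-(1/2)) 1 (1/2) 1 r (2*j-r) t)
      = RcS 1 1 (-1) 1 p1 q1 r * RcS (-(1/2)) 1 (1/2) 1 r (2*j-r) t := by
    intro r _
    rw [g0scale]
  rw [Finset.sum_congr rfl hstep]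
  have hpq : p1 + q1 = 2*j := by omega
  have htle : t ≤ p1 + q1 := by omega
  rw [show 2*j = p1 + q1 from hpq.symm]
  rw [← compRcS 1 1 (-1) 1 (-(1/2)) 1 (1/2) 1 p1 q1 t htle]
  rw [show (1:ℂ)*(-(1/2))+1*(1/2) = 0 by norm_num, show (1:ℂ)*1+1*1 = 2 by norm_num,
      show (-1:ℂ)*(-(1/2))+1*(1/2) = 1 by norm_num, show (-1:ℂ)*1+1*1 = 0 by norm_num]
  rw [RcS_anti]
  have hcond : (t = q1) ↔ (m1 = m3) := by constructor <;> (intro h; omega)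
  by_cases hm : m1 = m3
  · rw [if_pos (hcond.mpr hm), if_pos hm]
    subst hm
    rw [hCST, div_self (cc_ne_zero j m1)]
    have eI : Complex.I ^ (-(m1+m1)) = (-1:ℂ) ^ (-m1) := by
      rw [show -(m1+m1) = 2 * (-m1) by ring, zpow_mul, I_zpow_two]
    rw [eI]
    have e2p : ((2:ℂ))^(p1:ℕ) = (2:ℂ)^((j:ℤ) + m1) := by
      rw [← zpow_natCast]; congr 1; omega
    have e2i : ((2:ℂ)⁻¹)^(j:ℕ) = (2:ℂ)^(-(j:ℤ)) := by
      rw [inv_pow, ← zpow_natCast, ← zpow_neg]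
    have enj : ((-1:ℂ))^(j:ℕ) = (-1:ℂ)^((j:ℤ)) := by rw [← zpow_natCast]
    have eq1 : ((1:ℂ))^(q1:ℕ) = 1 := one_pow _
    rw [e2p, e2i, enj, eq1]
    calc 1 * (-1:ℂ)^(-m1) * (2:ℂ)^(-m1) * ((-1:ℂ)^((j:ℤ)) * (2:ℂ)^(-(j:ℤ))) *
          ((2:ℂ)^((j:ℤ)+m1) * 1)
        = ((-1:ℂ)^(-m1) * (-1:ℂ)^((j:ℤ))) *
          ((2:ℂ)^(-m1) * (2:ℂ)^(-(j:ℤ)) * (2:ℂ)^((j:ℤ)+m1)) := by ring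
      _ = (-1:ℂ)^(m1 + (j:ℤ)) := by
          rw [← zpow_add₀ (by norm_num : (-1:ℂ) ≠ 0) (-m1) ((j:ℤ)),
              zpow_merge3 2 two_ne_zero _ _ _ 0 (by ring), zpow_zero, mul_one]
          rw [show -m1 + (j:ℤ) = 2*(-m1) + (m1 + (j:ℤ)) by ring,
              zpow_add₀ (by norm_num : (-1:ℂ) ≠ 0), neg_one_zpow_two_mul, one_mul]
  · rw [if_neg (fun h => hm (hcond.mp h)), if_neg hm, mul_zero]

lemma SumA (j : ℕ) (k k' : ℤ) (hk : |k| ≤ (j:ℤ)) (hk' : |k'| ≤ (j:ℤ)) :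
    (∑ m2 ∈ Finset.Icc (-(j:ℤ)) (j:ℤ), Nmat j k m2 * Mmat j m2 k')
      = if k' = k then 1 else 0 := by
  have habk := abs_le.mp hk
  have habk' := abs_le.mp hk'
  set pk := ((j:ℤ)+k).toNat with hpk
  set qk := ((j:ℤ)-k).toNat with hqk
  set t := ((j:ℤ)-k').toNat with ht
  set CST := (cc j k' / cc j k) * Complex.I ^ (k+k') * (2:ℂ)^(-k') *
      ((-1:ℂ)^(j:ℕ) * ((2:ℂ)⁻¹)^(j:ℕ)) with hCST
  rw [sum_Icc_reindex j (fun m2 => Nmat j k m2 * Mmat j m2 k')]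
  have hterm : ∀ r ∈ range (2*j+1),
      Nmat j k ((j:ℤ)-r) * Mmat j ((j:ℤ)-r) k'
        = CST * (((-1:ℂ)^r * 2^r) * RcS (-(1/2)) 1 (1/2) 1 pk qk r
            * RcS (-(1/2)) 1 (1/2) 1 (2*j-r) r t) := by
    intro r hr
    rw [Finset.mem_range] at hr
    have hm2 : |(j:ℤ)-r| ≤ (j:ℤ) := by rw [abs_le]; omega
    rw [Nmat_eq j k ((j:ℤ)-r) hk hm2, Mmat_eq j ((j:ℤ)-r) k' hm2 hk']
    have e1 : ((j:ℤ) - ((j:ℤ)-r)).toNat = r := by omega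
    have e2 : ((j:ℤ) + ((j:ℤ)-r)).toNat = 2*j-r := by omega
    rw [e1, e2]
    have hA : cc j ((j:ℤ)-r) / cc j k * (cc j k' / cc j ((j:ℤ)-r))
        = cc j k' / cc j k := by
      rw [div_mul_div_comm, mul_comm (cc j ((j:ℤ)-(r:ℤ))) (cc j k'),
        mul_div_mul_right _ _ (cc_ne_zero j ((j:ℤ)-r))]
    calc (cc j ((j:ℤ)-r) / cc j k * Complex.I ^ (k - ((j:ℤ)-r)) * (2:ℂ)^(-((j:ℤ)-r)) *
            RcS (-(1/2)) 1 (1/2) 1 pk qk r) *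
          (cc j k' / cc j ((j:ℤ)-r) * Complex.I ^ (k' - ((j:ℤ)-r)) * (2:ℂ)^(-k') *
            RcS (-(1/2)) 1 (1/2) 1 (2*j-r) r t)
        = (cc j ((j:ℤ)-r) / cc j k * (cc j k' / cc j ((j:ℤ)-r))) *
            (Complex.I ^ (k - ((j:ℤ)-r)) * Complex.I ^ (k' - ((j:ℤ)-r))) *
            (2:ℂ)^(-((j:ℤ)-r)) * (2:ℂ)^(-k') *
            (RcS (-(1/2)) 1 (1/2) 1 pk qk r * RcS (-(1/2)) 1 (1/2) 1 (2*j-r) r t) := by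
          ring
      _ = _ := by
          rw [hA, I_zpow_mulA ((j:ℤ)-r) k k']
          rw [show -((j:ℤ)-(r:ℤ)) = ((r:ℕ):ℤ) - ((j:ℕ):ℤ) by push_cast; ring]
          rw [zpow_sub_split 2 two_ne_zero r j]
          rw [zpow_sub_split (-1) (by norm_num) r j]
          rw [show ((-1:ℂ))⁻¹ = -1 by norm_num]
          rw [hCST]
          ring
  rw [Finset.sum_congr rfl hterm, ← Finset.mul_sum]
  have hstep : ∀ r ∈ range (2*j+1),
      (((-1:ℂ)^r * 2^r) * RcS (-(1/2)) 1 (1/2) 1 pk qk r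
          * RcS (-(1/2)) 1 (1/2) 1 (2*j-r) r t)
      = RcS 1 1 (-1) 1 pk qk r * RcS (1/2) 1 (-(1/2)) 1 r (2*j-r) t := by
    intro r _
    rw [g0scale, RcS_swap (-(1/2)) 1 (1/2) 1 (2*j-r) r t]
  rw [Finset.sum_congr rfl hstep]
  have hpq : pk + qk = 2*j := by omega
  have htle : t ≤ pk + qk := by omega
  rw [show 2*j = pk + qk from hpq.symm]
  rw [← compRcS 1 1 (-1) 1 (1/2) 1 (-(1/2)) 1 pk qk t htle]
  rw [show (1:ℂ)*(1/2)+1*(-(1/2)) = 0 by norm_num, show (1:ℂ)*1+1*1 = 2 by norm_num,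
      show (-1:ℂ)*(1/2)+1*(-(1/2)) = -1 by norm_num, show (-1:ℂ)*1+1*1 = 0 by norm_num]
  rw [RcS_anti]
  have hcond : (t = qk) ↔ (k' = k) := by constructor <;> (intro h; omega)
  by_cases hm : k' = k
  · rw [if_pos (hcond.mpr hm), if_pos hm]
    subst hm
    rw [hCST, div_self (cc_ne_zero j k')]
    have eI : Complex.I ^ (k'+k') = (-1:ℂ) ^ (k') := by
      rw [show k'+k' = 2*k' by ring, zpow_mul, I_zpow_two]
    rw [eI]
    have e2p : ((2:ℂ))^(pk:ℕ) = (2:ℂ)^((j:ℤ) + k') := by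
      rw [← zpow_natCast]; congr 1; omega
    have e2i : ((2:ℂ)⁻¹)^(j:ℕ) = (2:ℂ)^(-(j:ℤ)) := by
      rw [inv_pow, ← zpow_natCast, ← zpow_neg]
    have eno : ((-1:ℂ))^(qk:ℕ) = (-1:ℂ)^((j:ℤ) - k') := by
      rw [← zpow_natCast]; congr 1; omega
    have enj : ((-1:ℂ))^(j:ℕ) = (-1:ℂ)^((j:ℤ)) := by rw [← zpow_natCast]
    rw [e2p, e2i, eno, enj]
    calc 1 * (-1:ℂ)^(k') * (2:ℂ)^(-k') * ((-1:ℂ)^((j:ℤ)) * (2:ℂ)^(-(j:ℤ))) *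
          ((2:ℂ)^((j:ℤ)+k') * (-1:ℂ)^((j:ℤ)-k'))
        = ((-1:ℂ)^(k') * (-1:ℂ)^((j:ℤ)) * (-1:ℂ)^((j:ℤ)-k')) *
          ((2:ℂ)^(-k') * (2:ℂ)^(-(j:ℤ)) * (2:ℂ)^((j:ℤ)+k')) := by ring
      _ = 1 := by
          rw [zpow_merge3 (-1) (by norm_num) _ _ _ (2*((j:ℤ))) (by ring),
              zpow_merge3 2 two_ne_zero _ _ _ 0 (by ring),
              neg_one_zpow_two_mul, zpow_zero, mul_one]
  · rw [if_neg (fun h => hm (hcond.mp h)), if_neg hm, mul_zero]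

lemma SumB (j : ℕ) (k k' : ℤ) (hk : |k| ≤ (j:ℤ)) (hk' : |k'| ≤ (j:ℤ)) :
    (∑ m2 ∈ Finset.Icc (-(j:ℤ)) (j:ℤ), (-1:ℂ)^m2 * Nmat j k m2 * Mmat j m2 k')
      = if k' = -k then (-1:ℂ)^((j:ℤ)+k) else 0 := by
  have habk := abs_le.mp hk
  have habk' := abs_le.mp hk'
  set pk := ((j:ℤ)+k).toNat with hpk
  set qk := ((j:ℤ)-k).toNat with hqk
  set t := ((j:ℤ)-k').toNat with ht
  set CST := (cc j k' / cc j k) * Complex.I ^ (k+k') * (2:ℂ)^(-k') *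
      (((2:ℂ)⁻¹)^(j:ℕ)) with hCST
  rw [sum_Icc_reindex j (fun m2 => (-1:ℂ)^m2 * Nmat j k m2 * Mmat j m2 k')]
  have hterm : ∀ r ∈ range (2*j+1),
      (-1:ℂ)^((j:ℤ)-r) * Nmat j k ((j:ℤ)-r) * Mmat j ((j:ℤ)-r) k'
        = CST * (((2:ℂ)^r) * RcS (-(1/2)) 1 (1/2) 1 pk qk r
            * RcS (-(1/2)) 1 (1/2) 1 (2*j-r) r t) := by
    intro r hr
    rw [Finset.mem_range] at hr
    have hm2 : |(j:ℤ)-r| ≤ (j:ℤ) := by rw [abs_le]; omega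
    rw [Nmat_eq j k ((j:ℤ)-r) hk hm2, Mmat_eq j ((j:ℤ)-r) k' hm2 hk']
    have e1 : ((j:ℤ) - ((j:ℤ)-r)).toNat = r := by omega
    have e2 : ((j:ℤ) + ((j:ℤ)-r)).toNat = 2*j-r := by omega
    rw [e1, e2]
    have hA : cc j ((j:ℤ)-r) / cc j k * (cc j k' / cc j ((j:ℤ)-r))
        = cc j k' / cc j k := by
      rw [div_mul_div_comm, mul_comm (cc j ((j:ℤ)-(r:ℤ))) (cc j k'),
        mul_div_mul_right _ _ (cc_ne_zero j ((j:ℤ)-r))]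
    calc (-1:ℂ)^((j:ℤ)-r) *
          (cc j ((j:ℤ)-r) / cc j k * Complex.I ^ (k - ((j:ℤ)-r)) * (2:ℂ)^(-((j:ℤ)-r)) *
            RcS (-(1/2)) 1 (1/2) 1 pk qk r) *
          (cc j k' / cc j ((j:ℤ)-r) * Complex.I ^ (k' - ((j:ℤ)-r)) * (2:ℂ)^(-k') *
            RcS (-(1/2)) 1 (1/2) 1 (2*j-r) r t)
        = (cc j ((j:ℤ)-r) / cc j k * (cc j k' / cc j ((j:ℤ)-r))) *
            ((-1:ℂ)^((j:ℤ)-r) * (Complex.I ^ (k - ((j:ℤ)-r)) * Complex.I ^ (k' - ((j:ℤ)-r)))) *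
            (2:ℂ)^(-((j:ℤ)-r)) * (2:ℂ)^(-k') *
            (RcS (-(1/2)) 1 (1/2) 1 pk qk r * RcS (-(1/2)) 1 (1/2) 1 (2*j-r) r t) := by
          ring
      _ = _ := by
          rw [hA, I_zpow_mulA ((j:ℤ)-r) k k']
          rw [show (-1:ℂ)^((j:ℤ)-r) * ((-1:ℂ)^(-((j:ℤ)-r)) * Complex.I ^ (k+k'))
              = Complex.I ^ (k+k') from by
            rw [← mul_assoc, ← zpow_add₀ (by norm_num : (-1:ℂ) ≠ 0),
              show (j:ℤ)-r + -((j:ℤ)-r) = 0 by ring, zpow_zero, one_mul]]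
          rw [show -((j:ℤ)-(r:ℤ)) = ((r:ℕ):ℤ) - ((j:ℕ):ℤ) by push_cast; ring]
          rw [zpow_sub_split 2 two_ne_zero r j]
          rw [hCST]
          ring
  rw [Finset.sum_congr rfl hterm, ← Finset.mul_sum]
  have hstep : ∀ r ∈ range (2*j+1),
      (((2:ℂ)^r) * RcS (-(1/2)) 1 (1/2) 1 pk qk r
          * RcS (-(1/2)) 1 (1/2) 1 (2*j-r) r t)
      = RcS (-1) 1 1 1 pk qk r * RcS (1/2) 1 (-(1/2)) 1 r (2*j-r) t := by
    intro r _
    rw [g0scale2, RcS_swap (-(1/2)) 1 (1/2) 1 (2*j-r) r t]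
  rw [Finset.sum_congr rfl hstep]
  have hpq : pk + qk = 2*j := by omega
  have htle : t ≤ pk + qk := by omega
  rw [show 2*j = pk + qk from hpq.symm]
  rw [← compRcS (-1) 1 1 1 (1/2) 1 (-(1/2)) 1 pk qk t htle]
  rw [show (-1:ℂ)*(1/2)+1*(-(1/2)) = -1 by norm_num, show (-1:ℂ)*1+1*1 = 0 by norm_num,
      show (1:ℂ)*(1/2)+1*(-(1/2)) = 0 by norm_num, show (1:ℂ)*1+1*1 = 2 by norm_num]
  rw [RcS_diag]
  have hcond : (t = pk) ↔ (k' = -k) := by constructor <;> (intro h; omega)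
  by_cases hm : k' = -k
  · rw [if_pos (hcond.mpr hm), if_pos hm]
    subst hm
    rw [hCST, cc_neg j k, div_self (cc_ne_zero j k)]
    rw [show k + -k = (0:ℤ) by ring, zpow_zero, neg_neg]
    have e2q : ((2:ℂ))^(qk:ℕ) = (2:ℂ)^((j:ℤ) - k) := by
      rw [← zpow_natCast]; congr 1; omega
    have enp : ((-1:ℂ))^(pk:ℕ) = (-1:ℂ)^((j:ℤ) + k) := by
      rw [← zpow_natCast]; congr 1; omega
    have e2i : ((2:ℂ)⁻¹)^(j:ℕ) = (2:ℂ)^(-(j:ℤ)) := by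
      rw [inv_pow, ← zpow_natCast, ← zpow_neg]
    rw [e2q, enp, e2i]
    calc 1 * 1 * (2:ℂ)^(k) * (2:ℂ)^(-(j:ℤ)) * ((-1:ℂ)^((j:ℤ)+k) * (2:ℂ)^((j:ℤ)-k))
        = ((2:ℂ)^(k) * (2:ℂ)^(-(j:ℤ)) * (2:ℂ)^((j:ℤ)-k)) * (-1:ℂ)^((j:ℤ)+k) := by ring
      _ = (-1:ℂ)^((j:ℤ)+k) := by
          rw [zpow_merge3 2 two_ne_zero _ _ _ 0 (by ring), zpow_zero, one_mul]
  · rw [if_neg (fun h => hm (hcond.mp h)), if_neg hm, mul_zero]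

lemma Qf_neg (w m : ℂ) : Qf w (-m) = Qf w m := by
  rw [Qf, Qf]
  rw [show w + -m = w - m by ring, show w - -m = w + m by ring,
    mul_comm (Complex.Gamma (w - m)) (Complex.Gamma (w + m))]

lemma sin_shift (x : ℂ) (k : ℤ) :
    Complex.sin (x + (k:ℂ) * (Real.pi:ℂ)) = (-1:ℂ)^k * Complex.sin x := by
  induction k using Int.induction_on with
  | zero => simp
  | succ i ih =>
    have e : ((i+1 : ℤ):ℂ) * (Real.pi:ℂ) = ((i:ℤ):ℂ)*(Real.pi:ℂ) + (Real.pi:ℂ) := by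
      push_cast; ring
    rw [e, ← add_assoc, Complex.sin_add_pi, ih, zpow_add_one₀ (by norm_num : (-1:ℂ) ≠ 0)]
    ring
  | pred i ih =>
    have e : ((-i-1 : ℤ):ℂ) * (Real.pi:ℂ) = ((-i:ℤ):ℂ)*(Real.pi:ℂ) - (Real.pi:ℂ) := by
      push_cast; ring
    rw [e, show x + (((-i:ℤ):ℂ)*(Real.pi:ℂ) - (Real.pi:ℂ))
        = (x + ((-i:ℤ):ℂ)*(Real.pi:ℂ)) - (Real.pi:ℂ) by ring,
      Complex.sin_sub_pi, ih, zpow_sub_one₀ (by norm_num : (-1:ℂ) ≠ 0)]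
    rw [show ((-1:ℂ))⁻¹ = -1 by norm_num]
    ring

lemma QQ (z : ℂ) (hz : ∀ n : ℤ, 2*z ≠ (n:ℂ)) (k : ℤ) :
    Qf z (k:ℂ) * Qf (1-z) (k:ℂ)
      = (Real.pi:ℂ) * (Complex.Gamma (z - 1/2) * Complex.Gamma (1/2 - z) /
          (Complex.Gamma z * Complex.Gamma (1 - z))) := by
  set pi' := (Real.pi : ℂ) with hpi'
  have hπ : pi' ≠ 0 := Complex.ofReal_ne_zero.mpr Real.pi_ne_zero
  set s := Complex.sin (pi' * z) with hs
  set c := Complex.cos (pi' * z) with hc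
  have hsz : s ≠ 0 := by
    intro h
    obtain ⟨n, hn⟩ := Complex.sin_eq_zero_iff.mp h
    have hzn : z = (n:ℂ) := mul_left_cancel₀ hπ (by rw [hn]; ring)
    exact hz (2*n) (by rw [hzn]; push_cast; ring)
  have hcz : c ≠ 0 := by
    intro h
    obtain ⟨n, hn⟩ := Complex.cos_eq_zero_iff.mp h
    have h2 : pi' * (2*z) = pi' * ((2*n+1 : ℤ):ℂ) := by
      rw [show pi' * (2*z) = 2 * (pi' * z) by ring, hn]; push_cast; ring
    exact hz (2*n+1) (mul_left_cancel₀ hπ h2)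
  have h12z : (1:ℂ) - 2*z ≠ 0 := fun h => hz 1 (by push_cast; linear_combination -h)
  have h12z' : (1:ℂ)/2 - z ≠ 0 := fun h => hz 1 (by push_cast; linear_combination -2*h)
  have hm1 : ((-1:ℂ))^k ≠ 0 := zpow_ne_zero k (by norm_num)
  have hm1' : ((-1:ℂ))^(-k) ≠ 0 := zpow_ne_zero (-k) (by norm_num)
  -- reflection pairs
  have h14 : Complex.Gamma (z + (k:ℂ)) * Complex.Gamma (1 - z - (k:ℂ))
      = pi' / ((-1:ℂ)^k * s) := by
    have h := Complex.Gamma_mul_Gamma_one_sub (z + (k:ℂ))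
    rw [show 1 - (z + (k:ℂ)) = 1 - z - (k:ℂ) by ring] at h
    rw [h]
    congr 1
    rw [show pi' * (z + (k:ℂ)) = pi' * z + (k:ℂ) * pi' by ring, sin_shift]
  have h23 : Complex.Gamma (z - (k:ℂ)) * Complex.Gamma (1 - z + (k:ℂ))
      = pi' / ((-1:ℂ)^(-k) * s) := by
    have h := Complex.Gamma_mul_Gamma_one_sub (z - (k:ℂ))
    rw [show 1 - (z - (k:ℂ)) = 1 - z + (k:ℂ) by ring] at h
    rw [h]
    congr 1
    rw [show pi' * (z - (k:ℂ)) = pi' * z + ((-k:ℤ):ℂ) * pi' by push_cast; ring, sin_shift]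
  have h3 : Complex.Gamma (2*z - 1) * Complex.Gamma (2 - 2*z)
      = pi' / (-(2 * (s * c))) := by
    have h := Complex.Gamma_mul_Gamma_one_sub (2*z - 1)
    rw [show 1 - (2*z - 1) = 2 - 2*z by ring] at h
    rw [h]
    congr 1
    rw [show pi' * (2*z - 1) = 2 * (pi' * z) - pi' by ring, Complex.sin_sub_pi,
      Complex.sin_two_mul]
    ring
  have h4 : Complex.Gamma (2 - 2*z) = (1 - 2*z) * Complex.Gamma (1 - 2*z) := by
    have h := Complex.Gamma_add_one (1 - 2*z) h12z
    rw [show 1 - 2*z + 1 = 2 - 2*z by ring] at h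
    exact h
  have hw : Complex.Gamma (2*z - 1) * Complex.Gamma (1 - 2*z)
      = pi' / (-(2 * (s * c)) * (1 - 2*z)) := by
    rw [h4] at h3
    have hd : -(2 * (s * c)) ≠ 0 := by
      simp only [neg_ne_zero]
      exact mul_ne_zero two_ne_zero (mul_ne_zero hsz hcz)
    have h5 := (eq_div_iff hd).mp h3
    rw [eq_div_iff (mul_ne_zero hd h12z)]
    linear_combination h5
  have hr1 : Complex.Gamma (z - 1/2) * Complex.Gamma (1/2 - z)
      = pi' / (-c * (1/2 - z)) := by
    have h := Complex.Gamma_mul_Gamma_one_sub (z - 1/2)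
    rw [show 1 - (z - 1/2) = (1/2 - z) + 1 by ring] at h
    rw [Complex.Gamma_add_one (1/2 - z) h12z'] at h
    rw [show pi' * (z - 1/2) = pi' * z - pi'/2 by ring, Complex.sin_sub_pi_div_two] at h
    have h5 := (eq_div_iff (neg_ne_zero.mpr hcz)).mp h
    rw [eq_div_iff (mul_ne_zero (neg_ne_zero.mpr hcz) h12z')]
    linear_combination h5
  have hr2 : Complex.Gamma z * Complex.Gamma (1 - z) = pi' / s :=
    Complex.Gamma_mul_Gamma_one_sub z
  -- nonvanishing of the Gamma pairs
  have hne14 := mul_ne_zero_iff.mp (h14 ▸ div_ne_zero hπ (mul_ne_zero hm1 hsz))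
  have hne23 := mul_ne_zero_iff.mp (h23 ▸ div_ne_zero hπ (mul_ne_zero hm1' hsz))
  have hkk : (-1:ℂ)^k * (-1:ℂ)^(-k) = 1 := by
    rw [← zpow_add₀ (by norm_num : (-1:ℂ) ≠ 0), add_neg_cancel, zpow_zero]
  have hcp : (2:ℂ)^((2:ℂ) - 2*z) * (2:ℂ)^((2:ℂ) - 2*(1-z)) = 4 := by
    rw [← Complex.cpow_add _ _ (by norm_num : (2:ℂ) ≠ 0),
      show (2:ℂ) - 2*z + ((2:ℂ) - 2*(1-z)) = ((2:ℕ):ℂ) by push_cast; ring,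
      Complex.cpow_natCast]
    norm_num
  rw [Qf, Qf, div_mul_div_comm, hr1, hr2]
  rw [show (2:ℂ) * (1-z) - 1 = 1 - 2*z by ring]
  calc pi' * (2:ℂ)^((2:ℂ) - 2*z) * Complex.Gamma (2*z-1) *
          (pi' * (2:ℂ)^((2:ℂ) - 2*(1-z)) * Complex.Gamma (1 - 2*z)) /
        (Complex.Gamma (z + (k:ℂ)) * Complex.Gamma (z - (k:ℂ)) *
          (Complex.Gamma (1 - z + (k:ℂ)) * Complex.Gamma (1 - z - (k:ℂ))))
      = pi' * pi' * ((2:ℂ)^((2:ℂ) - 2*z) * (2:ℂ)^((2:ℂ) - 2*(1-z))) *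
          (Complex.Gamma (2*z-1) * Complex.Gamma (1 - 2*z)) /
        ((Complex.Gamma (z + (k:ℂ)) * Complex.Gamma (1 - z - (k:ℂ))) *
          (Complex.Gamma (z - (k:ℂ)) * Complex.Gamma (1 - z + (k:ℂ)))) := by
        ring
    _ = pi' * pi' * 4 * (pi' / (-(2 * (s * c)) * (1 - 2*z))) /
        ((pi' / ((-1:ℂ)^k * s)) * (pi' / ((-1:ℂ)^(-k) * s))) := by
        rw [hcp, hw, h14, h23]
    _ = pi' * pi' * 4 * (pi' / (-(2 * (s * c)) * (1 - 2*z))) /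
        (pi' * pi' / (s * s)) := by
        congr 1
        rw [div_mul_div_comm]
        congr 1
        calc ((-1:ℂ)^k * s) * ((-1:ℂ)^(-k) * s) = ((-1:ℂ)^k * (-1:ℂ)^(-k)) * (s*s) := by ring
          _ = s * s := by rw [hkk, one_mul]
    _ = pi' * (pi' / (-c * (1/2 - z)) / (pi' / s)) := by
        have hfoo : pi' ^ 2 * s * c * 2 - pi' ^ 2 * s * c * z * 4 ≠ 0 := by
          have e : pi'^2*s*c*2 - pi'^2*s*c*z*4 = pi'^2*s*c*2*(1-2*z) := by ring
          rw [e]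
          exact mul_ne_zero (mul_ne_zero (mul_ne_zero
            (mul_ne_zero (pow_ne_zero 2 hπ) hsz) hcz) two_ne_zero) h12z
        field_simp [hπ, hsz, hcz, h12z, h12z', hfoo]
        ring

lemma neg_one_zpow_eq (n : ℤ) : (-1:ℂ)^n = if n % 2 = 0 then 1 else -1 := by
  rcases Int.even_or_odd n with ⟨t, ht⟩ | ⟨t, ht⟩
  · rw [ht, show t + t = 2*t by ring, neg_one_zpow_two_mul, if_pos (by omega)]
  · rw [ht, zpow_add₀ (by norm_num : (-1:ℂ) ≠ 0), neg_one_zpow_two_mul, one_mul, zpow_one,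
      if_neg (by omega)]

lemma parityW (ρ m2 : ℤ) (hρ : ρ = 0 ∨ ρ = 1) (A : ℂ) :
    (if m2 % 2 = ρ % 2 then A else 0)
      = ((1:ℂ)/2 + 1/2 * (-1:ℂ)^ρ * (-1:ℂ)^m2) * A := by
  rw [neg_one_zpow_eq ρ, neg_one_zpow_eq m2]
  by_cases he : m2 % 2 = ρ % 2
  · rw [if_pos he]
    rcases hρ with h | h <;> subst h
    · rw [if_pos (by omega), if_pos (by omega)]; ring
    · rw [if_neg (by omega), if_neg (by omega)]; ring
  · rw [if_neg he]
    rcases hρ with h | h <;> subst h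
    · rw [if_pos (by omega), if_neg (by omega)]; ring
    · rw [if_neg (by omega), if_pos (by omega)]; ring

lemma rearr (K : Finset ℤ) (W : ℤ → ℂ) (F G : ℤ → ℤ → ℂ) :
    (∑ m2 ∈ K, W m2 * ((∑ k ∈ K, F k m2) * (∑ k' ∈ K, G k' m2)))
      = ∑ k ∈ K, ∑ k' ∈ K, ∑ m2 ∈ K, W m2 * F k m2 * G k' m2 := by
  calc (∑ m2 ∈ K, W m2 * ((∑ k ∈ K, F k m2) * (∑ k' ∈ K, G k' m2)))
      = ∑ m2 ∈ K, ∑ k ∈ K, ∑ k' ∈ K, W m2 * F k m2 * G k' m2 := by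
        refine Finset.sum_congr rfl fun m2 _ => ?_
        rw [Finset.sum_mul_sum, Finset.mul_sum]
        refine Finset.sum_congr rfl fun k _ => ?_
        rw [Finset.mul_sum]
        refine Finset.sum_congr rfl fun k' _ => ?_
        ring
    _ = ∑ k ∈ K, ∑ m2 ∈ K, ∑ k' ∈ K, W m2 * F k m2 * G k' m2 := Finset.sum_comm
    _ = ∑ k ∈ K, ∑ k' ∈ K, ∑ m2 ∈ K, W m2 * F k m2 * G k' m2 :=
        Finset.sum_congr rfl fun k _ => Finset.sum_comm

/-- Functional equation for the normalizing products of simple intertwining operator entries: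
`Σ_{m2 ≡ ρ (2)} S^j_{m1,m2}(z) S^j_{m2,m3}(1−z) = π·Γ(z−1/2)Γ(1/2−z)/(Γ(z)Γ(1−z))·[m1=m3]`. -/
theorem stmt_3 (j : ℕ) (ρ : ℤ) (hρ : ρ = 0 ∨ ρ = 1) (m1 m3 : ℤ)
    (h1 : |m1| ≤ (j : ℤ)) (h3 : |m3| ≤ (j : ℤ))
    (hp1 : m1 % 2 = ρ % 2) (hp3 : m3 % 2 = ρ % 2)
    (z : ℂ) (hz : ∀ k : ℤ, 2 * z ≠ (k : ℂ)) :
    ∑ m2 ∈ (Finset.Icc (-(j : ℤ)) (j : ℤ)).filter (fun m2 => m2 % 2 = ρ % 2),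
        Smat j m1 m2 z * Smat j m2 m3 (1 - z) =
      (Real.pi : ℂ) *
          (Complex.Gamma (z - 1 / 2) * Complex.Gamma (1 / 2 - z) /
            (Complex.Gamma z * Complex.Gamma (1 - z))) *
        (if m1 = m3 then 1 else 0) := by
  have hab1 := abs_le.mp h1
  have hab3 := abs_le.mp h3
  have hnegone : (-1:ℂ) ≠ 0 := by norm_num
  rw [Finset.sum_filter]
  rw [Finset.sum_congr rfl (fun m2 _ => parityW ρ m2 hρ (Smat j m1 m2 z * Smat j m2 m3 (1-z)))]
  simp only [Smat]
  rw [rearr (Finset.Icc (-(j:ℤ)) (j:ℤ))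
      (fun m2 => (1:ℂ)/2 + 1/2 * (-1:ℂ)^ρ * (-1:ℂ)^m2)
      (fun k m2 => (-1:ℂ)^k * Mmat j m1 k * Nmat j k m2 * Qf z (k:ℂ))
      (fun k' m2 => (-1:ℂ)^k' * Mmat j m2 k' * Nmat j k' m3 * Qf (1-z) (k':ℂ))]
  have hInner : ∀ k ∈ Finset.Icc (-(j:ℤ)) (j:ℤ), ∀ k' ∈ Finset.Icc (-(j:ℤ)) (j:ℤ),
      (∑ m2 ∈ Finset.Icc (-(j:ℤ)) (j:ℤ),
        ((1:ℂ)/2 + 1/2 * (-1:ℂ)^ρ * (-1:ℂ)^m2)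
          * ((-1:ℂ)^k * Mmat j m1 k * Nmat j k m2 * Qf z (k:ℂ))
          * ((-1:ℂ)^k' * Mmat j m2 k' * Nmat j k' m3 * Qf (1-z) (k':ℂ)))
      = ((-1:ℂ)^k * Mmat j m1 k * Qf z (k:ℂ)
          * ((-1:ℂ)^k' * Nmat j k' m3 * Qf (1-z) (k':ℂ))) *
        ((1:ℂ)/2 * (if k' = k then 1 else 0)
          + (1/2*(-1:ℂ)^ρ) * (if k' = -k then (-1:ℂ)^((j:ℤ)+k) else 0)) := by
    intro k hk k' hk'
    rw [Finset.mem_Icc] at hk hk'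
    have hka : |k| ≤ (j:ℤ) := by rw [abs_le]; omega
    have hka' : |k'| ≤ (j:ℤ) := by rw [abs_le]; omega
    have hcg : ∀ m2 ∈ Finset.Icc (-(j:ℤ)) (j:ℤ),
        ((1:ℂ)/2 + 1/2 * (-1:ℂ)^ρ * (-1:ℂ)^m2)
          * ((-1:ℂ)^k * Mmat j m1 k * Nmat j k m2 * Qf z (k:ℂ))
          * ((-1:ℂ)^k' * Mmat j m2 k' * Nmat j k' m3 * Qf (1-z) (k':ℂ))
        = ((-1:ℂ)^k * Mmat j m1 k * Qf z (k:ℂ)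
            * ((-1:ℂ)^k' * Nmat j k' m3 * Qf (1-z) (k':ℂ))) *
          ((1:ℂ)/2 * (Nmat j k m2 * Mmat j m2 k')
            + (1/2*(-1:ℂ)^ρ) * ((-1:ℂ)^m2 * Nmat j k m2 * Mmat j m2 k')) := by
      intro m2 _
      ring
    rw [Finset.sum_congr rfl hcg, ← Finset.mul_sum]
    congr 1
    rw [Finset.sum_add_distrib, ← Finset.mul_sum, ← Finset.mul_sum]
    rw [SumA j k k' hka hka', SumB j k k' hka hka']
  rw [Finset.sum_congr rfl (fun k hk => Finset.sum_congr rfl (fun k' hk' => hInner k hk k' hk'))]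
  set Cz := (Real.pi:ℂ) * (Complex.Gamma (z - 1/2) * Complex.Gamma (1/2 - z) /
      (Complex.Gamma z * Complex.Gamma (1 - z))) with hCz
  have hsplit : ∀ k ∈ Finset.Icc (-(j:ℤ)) (j:ℤ),
      (∑ k' ∈ Finset.Icc (-(j:ℤ)) (j:ℤ),
        ((-1:ℂ)^k * Mmat j m1 k * Qf z (k:ℂ)
          * ((-1:ℂ)^k' * Nmat j k' m3 * Qf (1-z) (k':ℂ))) *
        ((1:ℂ)/2 * (if k' = k then 1 else 0)
          + (1/2*(-1:ℂ)^ρ) * (if k' = -k then (-1:ℂ)^((j:ℤ)+k) else 0)))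
      = (Cz/2) * (Mmat j m1 k * Nmat j k m3)
        + (Cz/2) * ((-1:ℂ)^ρ * (-1:ℂ)^((j:ℤ)))
            * ((-1:ℂ)^k * Mmat j m1 k * Nmat j (-k) m3) := by
    intro k hk
    rw [Finset.mem_Icc] at hk
    have hkmem : k ∈ Finset.Icc (-(j:ℤ)) (j:ℤ) := Finset.mem_Icc.mpr (by omega)
    have hkmem' : -k ∈ Finset.Icc (-(j:ℤ)) (j:ℤ) := Finset.mem_Icc.mpr (by omega)
    have hstep : ∀ k' ∈ Finset.Icc (-(j:ℤ)) (j:ℤ),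
        ((-1:ℂ)^k * Mmat j m1 k * Qf z (k:ℂ)
          * ((-1:ℂ)^k' * Nmat j k' m3 * Qf (1-z) (k':ℂ))) *
        ((1:ℂ)/2 * (if k' = k then 1 else 0)
          + (1/2*(-1:ℂ)^ρ) * (if k' = -k then (-1:ℂ)^((j:ℤ)+k) else 0))
        = (if k' = k then (1:ℂ)/2 * ((-1:ℂ)^k * Mmat j m1 k * Qf z (k:ℂ)
              * ((-1:ℂ)^k' * Nmat j k' m3 * Qf (1-z) (k':ℂ))) else 0)
          + (if k' = -k then (1/2*(-1:ℂ)^ρ) * (-1:ℂ)^((j:ℤ)+k)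
              * ((-1:ℂ)^k * Mmat j m1 k * Qf z (k:ℂ)
              * ((-1:ℂ)^k' * Nmat j k' m3 * Qf (1-z) (k':ℂ))) else 0) := by
      intro k' _
      split_ifs with e1 e2 e2 <;> ring
    rw [Finset.sum_congr rfl hstep, Finset.sum_add_distrib,
      Finset.sum_ite_eq' (Finset.Icc (-(j:ℤ)) (j:ℤ)) k,
      Finset.sum_ite_eq' (Finset.Icc (-(j:ℤ)) (j:ℤ)) (-k),
      if_pos hkmem, if_pos hkmem']
    have hq := QQ z hz k
    rw [← hCz] at hq
    have hsqk : (-1:ℂ)^k * (-1:ℂ)^k = 1 := by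
      rw [← zpow_add₀ hnegone, show k + k = 2*k by ring, neg_one_zpow_two_mul]
    have hkk2 : (-1:ℂ)^k * (-1:ℂ)^(-k) = 1 := by
      rw [← zpow_add₀ hnegone, add_neg_cancel, zpow_zero]
    have hjk : (-1:ℂ)^((j:ℤ)+k) = (-1:ℂ)^((j:ℤ)) * (-1:ℂ)^k := zpow_add₀ hnegone _ _
    have hqc : ((-k:ℤ):ℂ) = -((k:ℤ):ℂ) := by push_cast; ring
    congr 1
    · calc (1:ℂ)/2 * ((-1:ℂ)^k * Mmat j m1 k * Qf z (k:ℂ)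
            * ((-1:ℂ)^k * Nmat j k m3 * Qf (1-z) (k:ℂ)))
          = (Qf z (k:ℂ) * Qf (1-z) (k:ℂ)) * ((-1:ℂ)^k * (-1:ℂ)^k)
              * ((1:ℂ)/2 * (Mmat j m1 k * Nmat j k m3)) := by ring
        _ = _ := by rw [hq, hsqk]; ring
    · rw [hqc, Qf_neg]
      calc (1/2*(-1:ℂ)^ρ) * (-1:ℂ)^((j:ℤ)+k)
            * ((-1:ℂ)^k * Mmat j m1 k * Qf z (k:ℂ)
              * ((-1:ℂ)^(-k) * Nmat j (-k) m3 * Qf (1-z) (k:ℂ)))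
          = (Qf z (k:ℂ) * Qf (1-z) (k:ℂ)) * ((-1:ℂ)^k * (-1:ℂ)^(-k))
              * (-1:ℂ)^((j:ℤ)+k)
              * ((1/2*(-1:ℂ)^ρ) * (Mmat j m1 k * Nmat j (-k) m3)) := by ring
        _ = _ := by rw [hq, hkk2, hjk]; ring
  rw [Finset.sum_congr rfl hsplit, Finset.sum_add_distrib, ← Finset.mul_sum, ← Finset.mul_sum]
  have hS2 : (∑ k ∈ Finset.Icc (-(j:ℤ)) (j:ℤ), (-1:ℂ)^k * Mmat j m1 k * Nmat j (-k) m3)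
      = if m1 = m3 then (-1:ℂ)^(m3 + (j:ℤ)) else 0 := Sum2 j m1 m3 h1 h3
  have hS1 := Sum1 j m1 m3 h1 h3
  rw [hS1, hS2]
  by_cases hm : m1 = m3
  · rw [if_pos hm, if_pos hm]
    have hpar : (-1:ℂ)^ρ * (-1:ℂ)^((j:ℤ)) * (-1:ℂ)^(m3+(j:ℤ)) = 1 := by
      rw [zpow_merge3 (-1) hnegone ρ ((j:ℤ)) (m3+(j:ℤ)) (ρ + ((j:ℤ)) + (m3 + (j:ℤ))) rfl,
        neg_one_zpow_eq, if_pos (by omega)]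
    linear_combination (Cz/2) * hpar
  · rw [if_neg hm, if_neg hm]
    ring

end

end Stmt3
end

section
/- For every t ∈ ℝ, the following identity of 2×2 real matrices holds: [[1,0],[t,1]] = exp(arctan(−t) · [[0,1],[−1,0]]) · [[√(1+t²), 0],[0, 1/√(1+t²)]] · [[1, t/(1+t²)],[0,1]], where exp denotes the matrix exponential. -/
open Matrix

noncomputable def cMat : ℂ →+* Matrix (Fin 2) (Fin 2) ℝ where
  toFun z := !![z.re, z.im; -z.im, z.re]
  map_one' := by ext i j; fin_cases i <;> fin_cases j <;> simp <;> ring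
  map_mul' z w := by
    ext i j
    fin_cases i <;> fin_cases j <;>
      simp [Matrix.mul_apply, Fin.sum_univ_two, Complex.mul_re, Complex.mul_im] <;> ring
  map_zero' := by ext i j; fin_cases i <;> fin_cases j <;> simp <;> ring
  map_add' z w := by
    ext i j
    fin_cases i <;> fin_cases j <;> simp <;> ring

lemma cMat_continuous : Continuous cMat := by
  apply continuous_matrix
  intro i j
  fin_cases i <;> fin_cases j <;>
    simp [cMat] <;> continuity

lemma exp_J (θ : ℝ) :
    NormedSpace.exp (θ • (!![0, 1; -1, 0] : Matrix (Fin 2) (Fin 2) ℝ)) =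
      !![Real.cos θ, Real.sin θ; -Real.sin θ, Real.cos θ] := by
  letI : NormedRing (Matrix (Fin 2) (Fin 2) ℝ) := Matrix.linftyOpNormedRing
  letI : NormedAlgebra ℝ (Matrix (Fin 2) (Fin 2) ℝ) := Matrix.linftyOpNormedAlgebra
  have h1 : θ • (!![0, 1; -1, 0] : Matrix (Fin 2) (Fin 2) ℝ) = cMat (θ * Complex.I) := by
    ext i j
    fin_cases i <;> fin_cases j <;> simp [cMat]
  rw [h1]
  erw [← NormedSpace.map_exp cMat cMat_continuous]
  have h2 : NormedSpace.exp (θ * Complex.I) = Complex.exp (θ * Complex.I) := by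
    rw [Complex.exp_eq_exp_ℂ]
  rw [h2]
  ext i j
  fin_cases i <;> fin_cases j <;>
    simp [cMat, Complex.exp_mul_I, Complex.cos_ofReal_re, Complex.sin_ofReal_re]

/-- **Iwasawa decomposition in `SL(2,ℝ)`.**
For every `t ∈ ℝ`,
`[[1,0],[t,1]] = exp(arctan(−t)·[[0,1],[−1,0]]) * [[√(1+t²),0],[0,1/√(1+t²)]] * [[1,t/(1+t²)],[0,1]]`. -/
theorem stmt_13 (t : ℝ) :
    (!![1, 0; t, 1] : Matrix (Fin 2) (Fin 2) ℝ) =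
      NormedSpace.exp (Real.arctan (-t) • (!![0, 1; -1, 0] : Matrix (Fin 2) (Fin 2) ℝ)) *
        !![Real.sqrt (1 + t ^ 2), 0; 0, (Real.sqrt (1 + t ^ 2))⁻¹] *
        !![1, t / (1 + t ^ 2); 0, 1] := by
  rw [exp_J, Real.cos_arctan, Real.sin_arctan]
  have h0 : (0:ℝ) < 1 + t ^ 2 := by positivity
  have hs : (0:ℝ) < Real.sqrt (1 + t ^ 2) := Real.sqrt_pos.mpr h0
  have hsq : Real.sqrt (1 + t ^ 2) ^ 2 = 1 + t ^ 2 := Real.sq_sqrt h0.le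
  ext i j
  fin_cases i <;> fin_cases j <;>
    simp [Matrix.mul_apply, Fin.sum_univ_two] <;>
    field_simp <;> nlinarith [hsq, hs, congrArg (fun x => t * x) hsq]
end
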